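/- Let X be a topological vector space and let G : X → (−∞,∞] be bounded from below and convexly coercive. Then G attains its infimum on X, i.e., there exists x₀* ∈ X with G(x₀*) = inf_{x∈X} G(x). -/

import Mathlib

/-- A convex subset `C` of a topological vector space is *convexly compact* if every
family of closed and convex subsets of `C`, indexed by a nonempty set, having the
finite-intersection property, has nonempty total intersection. -/
def ConvexlyCompact {X : Type*} [AddCommGroup X] [Module ℝ X] [TopologicalSpace X]
    (C : Set X) : Prop :=
  Convex ℝ C ∧
    ∀ (A : Type) (_ : Nonempty A) (F : A → Set X),
      (∀ α, IsClosed (F α)) → (∀ α, Convex ℝ (F α)) → (∀ α, F α ⊆ C) →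
      (∀ D : Finset A, D.Nonempty → (⋂ α ∈ D, F α).Nonempty) →
      (⋂ α, F α).Nonempty

/-- A bounded-from-below, convexly coercive function
`G : X → (-∞,∞]` on a topological vector space attains its infimum: all the
lower-contour sets `L_G(l) = {x : G x ≤ l}`, `l ∈ (-∞,∞]`, are closed and convex, and
some `L_G(l₀)` is nonempty and convexly compact; then `G` attains its infimum on `X`. -/
theorem convexly_coercive_attains_inf
    {X : Type*} [AddCommGroup X] [Module ℝ X] [TopologicalSpace X]
    [IsTopologicalAddGroup X] [ContinuousSMul ℝ X]
    (G : X → EReal)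
    (hbdd : ∃ c : ℝ, ∀ x : X, (c : EReal) ≤ G x)
    (hclosed : ∀ l : EReal, l ≠ ⊥ → IsClosed {x : X | G x ≤ l})
    (hconvex : ∀ l : EReal, l ≠ ⊥ → Convex ℝ {x : X | G x ≤ l})
    (hcoercive : ∃ l₀ : EReal, l₀ ≠ ⊥ ∧ {x : X | G x ≤ l₀}.Nonempty ∧
      ConvexlyCompact {x : X | G x ≤ l₀}) :
    ∃ x₀ : X, G x₀ = ⨅ x : X, G x := by
  obtain ⟨l₀, hl₀bot, ⟨x₁, hx₁⟩, _, hCc⟩ := hcoercive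
  set m := ⨅ x : X, G x with hm
  rcases eq_or_lt_of_le (le_top : m ≤ ⊤) with htop | hlt
  · exact ⟨x₁, le_antisymm (htop ▸ le_top) (iInf_le _ _)⟩
  · set A := {l : EReal // m < l} with hA
    have hAne : Nonempty A := ⟨⟨⊤, hlt⟩⟩
    set F : A → Set X := fun l => {x : X | G x ≤ (l : EReal) ⊓ l₀} with hF
    have hbot : ∀ l : A, (l : EReal) ⊓ l₀ ≠ ⊥ := by
      rintro ⟨l, hl⟩
      have hlne : l ≠ ⊥ := (bot_le.trans_lt hl).ne'
      simp [min_eq_bot, hlne, hl₀bot]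
    have hFne : ∀ l : A, (F l).Nonempty := by
      rintro ⟨l, hl⟩
      rcases le_total l₀ l with h | h
      · exact ⟨x₁, le_inf (hx₁.trans h) hx₁⟩
      · obtain ⟨x, hx⟩ := iInf_lt_iff.mp hl
        exact ⟨x, le_inf hx.le (hx.le.trans h)⟩
    have hFsub : ∀ l : A, F l ⊆ {x : X | G x ≤ l₀} := fun l x hx => show G x ≤ l₀ from le_trans hx inf_le_right
    have hfip : ∀ D : Finset A, D.Nonempty → (⋂ α ∈ D, F α).Nonempty := by
      intro D hD
      obtain ⟨β, hβD, hβmin⟩ := D.exists_min_image (fun l => (l : EReal)) hD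
      obtain ⟨x, hx⟩ := hFne β
      refine ⟨x, Set.mem_iInter₂.mpr fun α hα => ?_⟩
      exact hx.trans (inf_le_inf_right _ (hβmin α hα))
    obtain ⟨x₀, hx₀⟩ := hCc A hAne F (fun l => hclosed _ (hbot l))
      (fun l => hconvex _ (hbot l)) hFsub hfip
    refine ⟨x₀, le_antisymm ?_ (iInf_le _ _)⟩
    by_contra h
    push_neg at h
    obtain ⟨l, hml, hlG⟩ := exists_between h
    have : G x₀ ≤ (l : EReal) ⊓ l₀ := Set.mem_iInter.mp hx₀ ⟨l, hml⟩
    exact absurd (this.trans inf_le_left) hlG.not_ge
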